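/- Let Γ = C[X_1,…,X_t] with t ≥ 3 and all |X_i| = k ≥ 2, and let F be an edge cut of Γ with |F| ≤ k. Then F is the set of all edges coming out of a single vertex or the set of all edges going into a single vertex, unless k = 2 and t = 2 (excluded) — i.e., for t ≥ 3 and k ≥ 2 every edge cut of size at most k is a full out-star or in-star of a vertex. -/

import Mathlib

open Set

namespace PaperDRD

variable {V : Type*}

def HasWalk (E : V → V → Prop) (u v : V) (n : ℕ) : Prop :=
  ∃ f : Fin (n + 1) → V, f 0 = u ∧ f (Fin.last n) = v ∧
    ∀ i : Fin n, E (f i.castSucc) (f i.succ)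

def StronglyConnected (E : V → V → Prop) : Prop :=
  ∀ u v : V, ∃ n : ℕ, HasWalk E u v n

noncomputable def ddist (E : V → V → Prop) (u v : V) : ℕ :=
  sInf {n : ℕ | HasWalk E u v n}

noncomputable def girth (E : V → V → Prop) : ℕ :=
  sInf {n : ℕ | 0 < n ∧ ∃ u : V, HasWalk E u u n}

noncomputable def diam [Fintype V] (E : V → V → Prop) : ℕ :=
  Finset.univ.sup fun p : V × V => ddist E p.1 p.2

noncomputable def outDeg (E : V → V → Prop) (x : V) : ℕ := {y : V | E x y}.ncard

noncomputable def inDeg (E : V → V → Prop) (x : V) : ℕ := {y : V | E y x}.ncard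

def IsRegular (E : V → V → Prop) (k : ℕ) : Prop :=
  ∀ x : V, outDeg E x = k ∧ inDeg E x = k

def DelEdges (E : V → V → Prop) (F : Set (V × V)) : V → V → Prop :=
  fun a b => E a b ∧ (a, b) ∉ F

def IsEdgeCut (E : V → V → Prop) (F : Set (V × V)) : Prop :=
  (∀ e ∈ F, E e.1 e.2) ∧ ¬ StronglyConnected (DelEdges E F)

noncomputable def edgeConnectivity (E : V → V → Prop) : ℕ :=
  sInf {n : ℕ | ∃ F : Set (V × V), IsEdgeCut E F ∧ F.ncard = n}

def IsMinEdgeCut (E : V → V → Prop) (F : Set (V × V)) : Prop :=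
  IsEdgeCut E F ∧ F.ncard = edgeConnectivity E

def outStar (E : V → V → Prop) (x : V) : Set (V × V) := {e : V × V | e.1 = x ∧ E x e.2}

def inStar (E : V → V → Prop) (x : V) : Set (V × V) := {e : V × V | e.2 = x ∧ E e.1 x}

def IsDRDigraph (E : V → V → Prop) (k : ℕ) : Prop :=
  Irreflexive E ∧ IsRegular E k ∧ StronglyConnected E ∧
    ∀ (i m : ℕ) (u v u' v' : V), 1 ≤ m → ddist E u v = m → ddist E u' v' = m →
      {w : V | ddist E u w = i ∧ E v w}.ncard = {w : V | ddist E u' w = i ∧ E v' w}.ncard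

def IsSRDigraph (E : V → V → Prop) (n k t lam mu : ℕ) : Prop :=
  Irreflexive E ∧ Nat.card V = n ∧ IsRegular E k ∧ StronglyConnected E ∧
    (∀ u : V, {w : V | E u w ∧ E w u}.ncard = t) ∧
    (∀ u v : V, u ≠ v → E u v → {w : V | E u w ∧ E w v}.ncard = lam) ∧
    (∀ u v : V, u ≠ v → ¬ E u v → {w : V | E u w ∧ E w v}.ncard = mu)

def IsUndirectedCycleN (E : V → V → Prop) (n : ℕ) : Prop :=
  ∃ e : V ≃ ZMod n, ∀ a b : V, E a b ↔ (e b = e a + 1 ∨ e a = e b + 1)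

def IsUndirectedCycle (E : V → V → Prop) : Prop :=
  ∃ n : ℕ, 3 ≤ n ∧ IsUndirectedCycleN E n

lemma hasWalk_snoc {E : V → V → Prop} {u w y : V} {n : ℕ}
    (h : HasWalk E u w n) (he : E w y) : HasWalk E u y (n+1) := by
  obtain ⟨f, h0, hl, hs⟩ := h
  refine ⟨Fin.snoc f y, ?_, ?_, ?_⟩
  · rw [show (0 : Fin (n+2)) = Fin.castSucc 0 by rfl, Fin.snoc_castSucc]; exact h0
  · simp [Fin.snoc_last]
  · intro i
    refine Fin.lastCases ?_ ?_ i
    · rw [Fin.succ_last, Fin.snoc_last, Fin.snoc_castSucc, hl]; exact he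
    · intro i
      rw [Fin.succ_castSucc, Fin.snoc_castSucc, Fin.snoc_castSucc]
      exact hs i

lemma nat_mul_ge {x y : ℕ} (hx : 1 ≤ x) (hy : 1 ≤ y) : x - 1 + y ≤ x * y := by
  obtain ⟨a, rfl⟩ := Nat.exists_eq_add_of_le hx
  obtain ⟨b, rfl⟩ := Nat.exists_eq_add_of_le hy
  have : (1+a)*(1+b) = 1 + a + b + a*b := by ring
  omega

open Fin.CommRing

theorem stmt9 [Fintype V] (t k : ℕ) [NeZero t] (ht : 3 ≤ t) (hk : 2 ≤ k)
    (X : Fin t → Finset V)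
    (hdisj : ∀ i j : Fin t, i ≠ j → Disjoint (X i) (X j))
    (hcard : ∀ i : Fin t, (X i).card = k)
    (hcover : ∀ v : V, ∃ i : Fin t, v ∈ X i)
    (E : V → V → Prop)
    (hE : ∀ x y : V, E x y ↔ ∃ i : Fin t, x ∈ X i ∧ y ∈ X (i + 1))
    (F : Set (V × V)) (hcut : IsEdgeCut E F) (hFk : F.ncard ≤ k) :
    (∃ x : V, F = outStar E x) ∨ (∃ x : V, F = inStar E x) := by
  classical
  -- basic Fin t facts
  have h10 : (1 : Fin t) ≠ 0 := by
    have h : ((1:ℕ) : Fin t).val = 1 := Fin.val_cast_of_lt (by omega)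
    intro hc; rw [Nat.cast_one, hc] at h; simp at h
  have hlayer : ∀ (x : V) (i j : Fin t), x ∈ X i → x ∈ X j → i = j := by
    intro x i j hi hj
    by_contra hne
    exact (Finset.disjoint_left.mp (hdisj i j hne) hi) hj
  -- get the unreachable pair
  obtain ⟨hF, hnsc⟩ := hcut
  rw [StronglyConnected] at hnsc
  push_neg at hnsc
  obtain ⟨u, v, huv⟩ := hnsc
  -- reachable set
  set R : Set V := {w | ∃ n, HasWalk (DelEdges E F) u w n} with hR
  have hu : u ∈ R := ⟨0, fun _ => u, rfl, rfl, fun i => i.elim0⟩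
  have hv : v ∉ R := fun ⟨n, h⟩ => huv n h
  have hclose : ∀ x y : V, x ∈ R → E x y → (x,y) ∉ F → y ∈ R := by
    rintro x y ⟨n, hn⟩ hxy hnF
    exact ⟨n+1, hasWalk_snoc hn ⟨hxy, hnF⟩⟩
  have hedge : ∀ (i : Fin t) (x y : V), x ∈ X i → y ∈ X (i+1) → x ∈ R → y ∉ R → (x,y) ∈ F := by
    intro i x y hx hy hxR hyR
    by_contra hnF
    exact hyR (hclose x y hxR ((hE x y).mpr ⟨i, hx, hy⟩) hnF)
  -- layer counts
  set a : Fin t → ℕ := fun i => ((X i).filter (· ∈ R)).card with ha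
  have hale : ∀ i, a i ≤ k := fun i => le_of_le_of_eq (Finset.card_filter_le _ _) (hcard i)
  have hbcard : ∀ i : Fin t, ((X (i+1)).filter (· ∉ R)).card = k - a (i+1) := by
    intro i
    have h1 := Finset.card_filter_add_card_filter_not (s := X (i+1)) (p := (· ∈ R))
    rw [hcard] at h1
    have h2 : ((X (i+1)).filter (· ∈ R)).card = a (i+1) := rfl
    omega
  -- the sum bound
  have hFfin : F.Finite := Set.toFinite F
  have hsum : ∑ i : Fin t, a i * (k - a (i+1)) ≤ F.ncard := by
    have hC : ∀ i : Fin t, (((X i).filter (· ∈ R)) ×ˢ ((X (i+1)).filter (· ∉ R))).card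
        = a i * (k - a (i+1)) := by
      intro i; rw [Finset.card_product, hbcard]
    calc ∑ i : Fin t, a i * (k - a (i+1))
        = ∑ i : Fin t, (((X i).filter (· ∈ R)) ×ˢ ((X (i+1)).filter (· ∉ R))).card := by
          exact (Finset.sum_congr rfl (fun i _ => (hC i).symm))
      _ = (Finset.univ.biUnion (fun i : Fin t =>
            ((X i).filter (· ∈ R)) ×ˢ ((X (i+1)).filter (· ∉ R)))).card := by
          refine (Finset.card_biUnion ?_).symm
          intro i _ j _ hij
          rw [Function.onFun, Finset.disjoint_left]
          rintro ⟨x, y⟩ hxi hxj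
          simp only [Finset.mem_product, Finset.mem_filter] at hxi hxj
          exact hij (hlayer x i j hxi.1.1 hxj.1.1)
      _ ≤ hFfin.toFinset.card := by
          apply Finset.card_le_card
          intro e he
          simp only [Finset.mem_biUnion] at he
          obtain ⟨i, _, hei⟩ := he
          simp only [Finset.mem_product, Finset.mem_filter] at hei
          rw [Set.Finite.mem_toFinset]
          exact hedge i e.1 e.2 hei.1.1 hei.2.1 hei.1.2 hei.2.2
      _ = F.ncard := (Set.ncard_eq_toFinset_card F hFfin).symm
  -- u's layer nonempty, v's layer not full
  obtain ⟨iu, hiu⟩ := hcover u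
  have hau : 1 ≤ a iu := Finset.card_pos.mpr ⟨u, Finset.mem_filter.mpr ⟨hiu, hu⟩⟩
  obtain ⟨iv, hiv⟩ := hcover v
  have hav : a iv < k := by
    rw [← hcard iv]
    apply Finset.card_lt_card
    refine ⟨Finset.filter_subset _ _, fun hsub => hv ?_⟩
    exact (Finset.mem_filter.mp (hsub hiv)).2
  -- helper: realize a star as F
  have star_eq : ∀ (S : Set (V × V)), S ⊆ F → k ≤ S.ncard → F = S := by
    intro S hSF hcard'
    exact (Set.eq_of_subset_of_ncard_le hSF (hFk.trans hcard') hFfin).symm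
  -- CASE SPLIT
  by_cases hz : ∃ i, a i = 0
  · -- find a boundary i₀ with a i₀ ≥ 1, a (i₀+1) = 0; conclude out-star
    obtain ⟨iz, hiz⟩ := hz
    have hbdy : ∃ i₀ : Fin t, a i₀ ≠ 0 ∧ a (i₀ + 1) = 0 := by
      have hex : ∃ m : ℕ, a (iu + ↑m) = 0 := by
        refine ⟨(iz - iu).val, ?_⟩
        rw [Fin.cast_val_eq_self]
        rw [show iu + (iz - iu) = iz by ring]
        exact hiz
      set m₀ := Nat.find hex with hm₀
      have hm0 : a (iu + ↑m₀) = 0 := Nat.find_spec hex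
      have hm₀pos : 1 ≤ m₀ := by
        rcases Nat.eq_zero_or_pos m₀ with h | h
        · exfalso; rw [h] at hm0; simp at hm0; omega
        · exact h
      refine ⟨iu + ↑(m₀ - 1), ?_, ?_⟩
      · exact Nat.find_min hex (by omega)
      · rw [show iu + ↑(m₀ - 1) + 1 = iu + ↑m₀ by
          rw [show (m₀ : ℕ) = (m₀ - 1) + 1 by omega]; push_cast; ring]
        exact hm0
    obtain ⟨i₀, hi₀ne, hi₀z⟩ := hbdy
    -- term at i₀ is a i₀ * k ≥ k
    have hterm : a i₀ * (k - a (i₀+1)) ≤ ∑ i : Fin t, a i * (k - a (i+1)) :=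
      Finset.single_le_sum (f := fun i => a i * (k - a (i+1)))
        (fun i _ => Nat.zero_le _) (Finset.mem_univ i₀)
    rw [hi₀z, Nat.sub_zero] at hterm
    have hai₀ : a i₀ = 1 := by
      have h1 : 1 ≤ a i₀ := Nat.one_le_iff_ne_zero.mpr hi₀ne
      have h2 : a i₀ * k ≤ 1 * k := by rw [one_mul]; exact hterm.trans (hsum.trans hFk)
      have h3 : a i₀ ≤ 1 := Nat.le_of_mul_le_mul_right h2 (by omega)
      omega
    have hFk' : F.ncard = k := by
      rw [hai₀, one_mul] at hterm
      omega
    -- all other terms are zero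
    have hrest : ∀ j : Fin t, j ≠ i₀ → a j * (k - a (j+1)) = 0 := by
      have hsplit : a i₀ * (k - a (i₀+1)) + ∑ i ∈ Finset.univ.erase i₀, a i * (k - a (i+1))
          = ∑ i : Fin t, a i * (k - a (i+1)) :=
        Finset.add_sum_erase Finset.univ (fun i => a i * (k - a (i+1))) (Finset.mem_univ i₀)
      have hzero : ∑ i ∈ Finset.univ.erase i₀, a i * (k - a (i+1)) = 0 := by
        rw [hai₀, hi₀z] at hsplit
        simp only [Nat.sub_zero, one_mul] at hsplit
        omega
      intro j hj
      exact (Finset.sum_eq_zero_iff.mp hzero) j (Finset.mem_erase.mpr ⟨hj, Finset.mem_univ j⟩)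
    -- propagate: all layers other than i₀ are empty
    have hprop : ∀ m : ℕ, 1 ≤ m → m ≤ t - 1 → a (i₀ - ↑m) = 0 := by
      intro m
      induction m with
      | zero => omega
      | succ p ih =>
        intro _ hle
        have hcastne : ((p+1 : ℕ) : Fin t) ≠ 0 := by
          have hval : (((p+1:ℕ)) : Fin t).val = p+1 := Fin.val_cast_of_lt (by omega)
          intro hc; rw [hc] at hval; simp at hval
        have hidx : i₀ - ↑(p+1) ≠ i₀ := by
          intro hc
          exact hcastne (by
            have := sub_eq_self.mp hc
            exact this)
        have hterm0 := hrest _ hidx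
        rw [show i₀ - ↑(p+1) + 1 = i₀ - ↑p by push_cast; ring] at hterm0
        have hnextlt : a (i₀ - ↑p) ≤ 1 := by
          rcases Nat.eq_zero_or_pos p with hp | hp
          · rw [hp]; simp only [Nat.cast_zero, sub_zero]; omega
          · rw [ih (by omega) (by omega)]; omega
        rcases Nat.mul_eq_zero.mp hterm0 with h | h
        · exact h
        · omega
    have hempty : ∀ j : Fin t, j ≠ i₀ → a j = 0 := by
      intro j hj
      have : j = i₀ - ↑((i₀ - j).val) := by
        rw [Fin.cast_val_eq_self]; ring
      rw [this]
      refine hprop _ ?_ ?_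
      · have : i₀ - j ≠ 0 := fun hc => hj (sub_eq_zero.mp hc).symm
        exact Nat.one_le_iff_ne_zero.mpr (fun hc => this (Fin.ext (by simp only [hc, Fin.val_zero])))
      · have := (i₀ - j).isLt; omega
    -- extract the vertex x
    obtain ⟨x, hx⟩ := Finset.card_eq_one.mp hai₀
    have hxX : x ∈ X i₀ ∧ x ∈ R := by
      have : x ∈ (X i₀).filter (· ∈ R) := by rw [hx]; exact Finset.mem_singleton_self x
      exact ⟨(Finset.mem_filter.mp this).1, (Finset.mem_filter.mp this).2⟩
    have hRx : R = {x} := by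
      ext w
      constructor
      · intro hw
        obtain ⟨j, hj⟩ := hcover w
        by_cases hji : j = i₀
        · subst hji
          have : w ∈ (X j).filter (· ∈ R) := Finset.mem_filter.mpr ⟨hj, hw⟩
          rw [hx] at this
          simpa using this
        · exfalso
          have h0 : ((X j).filter (· ∈ R)).card = 0 := hempty j hji
          rw [Finset.card_eq_zero] at h0
          have : w ∈ (X j).filter (· ∈ R) := Finset.mem_filter.mpr ⟨hj, hw⟩
          rw [h0] at this; simp at this
      · intro hw; rw [Set.mem_singleton_iff] at hw; subst hw; exact hxX.2
    -- outStar E x = {x} ×ˢ X (i₀+1)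
    have hstar : outStar E x = ↑(({x} : Finset V) ×ˢ X (i₀ + 1)) := by
      ext ⟨x', y⟩
      simp only [outStar, Set.mem_setOf_eq, Finset.coe_product, Set.mem_prod,
        Finset.coe_singleton, Set.mem_singleton_iff, Finset.mem_coe]
      constructor
      · rintro ⟨h1, hxy⟩
        obtain ⟨j, hxj, hyj⟩ := (hE x y).mp hxy
        exact ⟨h1, by rwa [hlayer x j i₀ hxj hxX.1] at hyj⟩
      · rintro ⟨h1, hy⟩
        exact ⟨h1, (hE x y).mpr ⟨i₀, hxX.1, hy⟩⟩
    have hsub : outStar E x ⊆ F := by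
      rintro ⟨x', y⟩ he
      rw [hstar] at he
      simp only [Finset.coe_product, Set.mem_prod, Finset.coe_singleton,
        Set.mem_singleton_iff, Finset.mem_coe] at he
      obtain ⟨h1, hy⟩ := he
      rw [h1]
      apply hedge i₀ x y hxX.1 hy hxX.2
      intro hyR
      rw [hRx, Set.mem_singleton_iff] at hyR
      subst hyR
      have h2 : i₀ + 1 = i₀ + 0 := by rw [add_zero]; exact hlayer y _ _ hy hxX.1
      exact h10 (add_left_cancel h2)
    have hcardstar : k ≤ (outStar E x).ncard := by
      rw [hstar, Set.ncard_coe_finset, Finset.card_product, Finset.card_singleton, one_mul,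
        hcard]
    exact Or.inl ⟨x, star_eq _ hsub hcardstar⟩
  · push_neg at hz
    have hz1 : ∀ i, 1 ≤ a i := fun i => Nat.one_le_iff_ne_zero.mpr (hz i)
    by_cases hfull : ∃ j : Fin t, a j < k ∧ a (j - 1) = k
    · -- in-star case
      obtain ⟨j, hjlt, hjfull⟩ := hfull
      have hterm : a (j-1) * (k - a (j-1+1)) ≤ ∑ i : Fin t, a i * (k - a (i+1)) :=
        Finset.single_le_sum (f := fun i => a i * (k - a (i+1)))
          (fun i _ => Nat.zero_le _) (Finset.mem_univ (j - 1))
      rw [show j - 1 + 1 = j by ring, hjfull] at hterm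
      have haj : a j = k - 1 := by
        have h1 : 1 ≤ k - a j := by omega
        have h2 : k * (k - a j) ≤ k * 1 := by rw [mul_one]; exact hterm.trans (hsum.trans hFk)
        have h3 : k - a j ≤ 1 := Nat.le_of_mul_le_mul_left h2 (by omega)
        omega
      have hFk' : F.ncard = k := by
        have h1 : k - a j = 1 := by omega
        rw [h1, mul_one] at hterm
        omega
      have hrest : ∀ i : Fin t, i ≠ j - 1 → a i * (k - a (i+1)) = 0 := by
        have hsplit : a (j-1) * (k - a (j-1+1)) + ∑ i ∈ Finset.univ.erase (j-1), a i * (k - a (i+1))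
            = ∑ i : Fin t, a i * (k - a (i+1)) :=
          Finset.add_sum_erase Finset.univ (fun i => a i * (k - a (i+1))) (Finset.mem_univ (j - 1))
        have h1 : k - a j = 1 := by omega
        have hzero : ∑ i ∈ Finset.univ.erase (j-1), a i * (k - a (i+1)) = 0 := by
          rw [show j - 1 + 1 = j by ring, hjfull, h1, mul_one] at hsplit
          omega
        intro i hi
        exact (Finset.sum_eq_zero_iff.mp hzero) i (Finset.mem_erase.mpr ⟨hi, Finset.mem_univ i⟩)
      have hallfull : ∀ l : Fin t, l ≠ j → a l = k := by
        intro l hl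
        have hne : l - 1 ≠ j - 1 := fun hc => hl (sub_left_injective hc)
        have := hrest (l - 1) hne
        rw [show l - 1 + 1 = l by ring] at this
        rcases Nat.mul_eq_zero.mp this with h | h
        · exact absurd h (hz _)
        · have := hale l; omega
      -- extract w
      have hwcard : ((X j).filter (· ∉ R)).card = 1 := by
        have h1 := Finset.card_filter_add_card_filter_not (s := X j) (p := (· ∈ R))
        rw [hcard] at h1
        have h2 : ((X j).filter (· ∈ R)).card = a j := rfl
        omega
      obtain ⟨w, hw⟩ := Finset.card_eq_one.mp hwcard
      have hwX : w ∈ X j ∧ w ∉ R := by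
        have : w ∈ (X j).filter (· ∉ R) := by rw [hw]; exact Finset.mem_singleton_self w
        exact ⟨(Finset.mem_filter.mp this).1, (Finset.mem_filter.mp this).2⟩
      have hRfull : ∀ (l : Fin t), l ≠ j → ∀ z ∈ X l, z ∈ R := by
        intro l hl z hzl
        have hcardeq : ((X l).filter (· ∈ R)).card = (X l).card := by
          rw [hcard]; exact hallfull l hl
        have := Finset.eq_of_subset_of_card_le (Finset.filter_subset (· ∈ R) (X l))
          (le_of_eq hcardeq.symm)
        rw [← this] at hzl
        exact (Finset.mem_filter.mp hzl).2
      have hstar : inStar E w = ↑((X (j - 1)) ×ˢ ({w} : Finset V)) := by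
        ext ⟨x', y⟩
        simp only [inStar, Set.mem_setOf_eq, Finset.coe_product, Set.mem_prod,
          Finset.coe_singleton, Set.mem_singleton_iff, Finset.mem_coe]
        constructor
        · rintro ⟨h2, hxy⟩
          obtain ⟨m, hxm, hym⟩ := (hE x' w).mp hxy
          have hmj : m + 1 = j := hlayer w _ _ hym hwX.1
          exact ⟨by rwa [show j - 1 = m by rw [← hmj]; ring], h2⟩
        · rintro ⟨hx', h2⟩
          exact ⟨h2, (hE x' w).mpr ⟨j - 1, hx', by rw [show j - 1 + 1 = j by ring]; exact hwX.1⟩⟩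
      have hsub : inStar E w ⊆ F := by
        rintro ⟨x', y⟩ he
        rw [hstar] at he
        simp only [Finset.coe_product, Set.mem_prod, Finset.coe_singleton,
          Set.mem_singleton_iff, Finset.mem_coe] at he
        obtain ⟨hx', h2⟩ := he
        rw [h2]
        have hj1 : j - 1 ≠ j := by
          intro hc
          exact h10 (by simpa using sub_eq_self.mp hc)
        have hx'R : x' ∈ R := hRfull (j - 1) hj1 x' hx'
        exact hedge (j - 1) x' w hx' (by rw [show j - 1 + 1 = j by ring]; exact hwX.1) hx'R hwX.2
      have hcardstar : k ≤ (inStar E w).ncard := by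
        rw [hstar, Set.ncard_coe_finset, Finset.card_product, Finset.card_singleton, mul_one,
          hcard]
      exact Or.inr ⟨w, star_eq _ hsub hcardstar⟩
    · -- contradiction case: all layers strictly between
      exfalso
      push_neg at hfull
      have hstep : ∀ i : Fin t, a i < k → a (i - 1) < k := by
        intro i hi
        have := hfull i hi
        have := hale (i - 1)
        omega
      have hprop : ∀ m : ℕ, a (iv - ↑m) < k := by
        intro m
        induction m with
        | zero => simpa using hav
        | succ p ih =>
          rw [show iv - ↑(p+1) = (iv - ↑p) - 1 by push_cast; ring]
          exact hstep _ ih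
      have hallt : ∀ i : Fin t, a i < k := by
        intro i
        have : i = iv - ↑((iv - i).val) := by rw [Fin.cast_val_eq_self]; ring
        rw [this]; exact hprop _
      have hbound : ∀ i : Fin t, (a i - 1) + (k - a (i+1)) ≤ a i * (k - a (i+1)) :=
        fun i => nat_mul_ge (hz1 i) (by have := hallt (i+1); omega)
      have hs1 : ∑ i : Fin t, ((a i - 1) + (k - a (i+1))) ≤ ∑ i : Fin t, a i * (k - a (i+1)) :=
        Finset.sum_le_sum (fun i _ => hbound i)
      have hs2 : ∑ i : Fin t, (k - a (i+1)) = ∑ i : Fin t, (k - a i) :=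
        Fintype.sum_equiv (Equiv.addRight (1 : Fin t)) _ _ (fun i => rfl)
      have hs3 : ∑ i : Fin t, ((a i - 1) + (k - a (i+1)))
          = ∑ i : Fin t, (a i - 1) + ∑ i : Fin t, (k - a (i+1)) := Finset.sum_add_distrib
      have hs4 : ∑ i : Fin t, (a i - 1) + ∑ i : Fin t, (k - a i)
          = ∑ i : Fin t, ((a i - 1) + (k - a i)) := Finset.sum_add_distrib.symm
      have hs5 : ∑ i : Fin t, ((a i - 1) + (k - a i)) = ∑ i : Fin t, (k - 1) := by
        refine Finset.sum_congr rfl (fun i _ => ?_)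
        have h1 := hz1 i
        have h2 := hallt i
        omega
      have hs6 : ∑ i : Fin t, (k - 1) = t * (k - 1) := by
        rw [Finset.sum_const, Finset.card_univ, Fintype.card_fin, smul_eq_mul]
      have hfin : t * (k - 1) ≤ k := by
        calc t * (k-1) = ∑ i : Fin t, (k - 1) := hs6.symm
          _ = ∑ i : Fin t, ((a i - 1) + (k - a i)) := hs5.symm
          _ = ∑ i : Fin t, (a i - 1) + ∑ i : Fin t, (k - a i) := hs4.symm
          _ = ∑ i : Fin t, (a i - 1) + ∑ i : Fin t, (k - a (i+1)) := by rw [hs2]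
          _ = ∑ i : Fin t, ((a i - 1) + (k - a (i+1))) := hs3.symm
          _ ≤ ∑ i : Fin t, a i * (k - a (i+1)) := hs1
          _ ≤ F.ncard := hsum
          _ ≤ k := hFk
      have h3 : 3 * (k - 1) ≤ t * (k - 1) := Nat.mul_le_mul_right _ ht
      omega


end PaperDRD
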